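/- Let H be a finite set of integers with m elements that is admissible, i.e. ν_p(H) < p for every prime p. Then the function assigning to each prime p the value (1 - ν_p(H)/p)·(1 - 1/p)^{-m} (as a real number) is multipliable, and its product over all primes is strictly positive. In particular, the Selberg constant 𝔖(H) of an admissible pattern satisfies 𝔖(H) > 0. -/

import Mathlib

/-- `nu p H` is the number of distinct residues of the elements of `H` modulo `p`. -/
def nu (p : ℕ) (H : Finset ℤ) : ℕ := (H.image (fun h : ℤ => (h : ZMod p))).card



lemma log_one_sub_bound {x : ℝ} (h0 : 0 ≤ x) (h1 : x ≤ 1/2) :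
    |Real.log (1 - x) + x| ≤ 2 * x ^ 2 := by
  have hx : |x| < 1 := by rw [abs_of_nonneg h0]; linarith
  have h := Real.abs_log_sub_add_sum_range_le hx 1
  simp only [Finset.sum_range_one, pow_one, Nat.cast_zero, zero_add, div_one] at h
  rw [abs_of_nonneg h0] at h
  have : x ^ 2 / (1 - x) ≤ 2 * x ^ 2 := by
    rw [div_le_iff₀ (by linarith)]
    nlinarith [sq_nonneg x]
  calc |Real.log (1 - x) + x| = |x + Real.log (1 - x)| := by rw [add_comm]
    _ ≤ x ^ 2 / (1 - x) := by rw [show x^2 = x^(1+1) by ring]; exact h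
    _ ≤ 2 * x ^ 2 := this

lemma nu_le (p : ℕ) (H : Finset ℤ) : nu p H ≤ H.card := Finset.card_image_le

lemma nu_eq_of_large (H : Finset ℤ) {p : ℕ}
    (hlarge : ∀ a ∈ H, ∀ b ∈ H, (a - b).natAbs < p) : nu p H = H.card := by
  apply Finset.card_image_of_injOn
  intro a ha b hb hab
  have hdvd : (p : ℤ) ∣ a - b := by
    rwa [← ZMod.intCast_zmod_eq_zero_iff_dvd, Int.cast_sub, sub_eq_zero]
  have habs : |a - b| < (p : ℤ) := by
    rw [Int.abs_eq_natAbs]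
    exact_mod_cast hlarge a ha b hb
  have := Int.eq_zero_of_abs_lt_dvd hdvd habs
  linarith

/-- For an admissible pattern `H` (i.e. `ν_p(H) < p` for every prime `p`) with `m`
elements, the Selberg product `∏_p (1 - ν_p(H)/p)·(1 - 1/p)^{-m}` is multipliable
and strictly positive: `𝔖(H) > 0`. -/
theorem selberg_constant_pos (H : Finset ℤ) (m : ℕ) (hm : H.card = m)
    (hadm : ∀ p : ℕ, p.Prime → nu p H < p) :
    Multipliable (fun p : Nat.Primes =>
        (1 - (nu p H : ℝ) / ((p : ℕ) : ℝ)) * (1 - 1 / ((p : ℕ) : ℝ)) ^ (-(m : ℤ))) ∧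
    0 < ∏' p : Nat.Primes,
        (1 - (nu p H : ℝ) / ((p : ℕ) : ℝ)) * (1 - 1 / ((p : ℕ) : ℝ)) ^ (-(m : ℤ)) := by
  set f : Nat.Primes → ℝ := fun p =>
    (1 - (nu p H : ℝ) / ((p : ℕ) : ℝ)) * (1 - 1 / ((p : ℕ) : ℝ)) ^ (-(m : ℤ)) with hf
  -- basic facts about primes
  have hp2 : ∀ p : Nat.Primes, (2 : ℝ) ≤ ((p : ℕ) : ℝ) := fun p => by
    exact_mod_cast p.2.two_le
  have hppos : ∀ p : Nat.Primes, (0 : ℝ) < ((p : ℕ) : ℝ) := fun p => by linarith [hp2 p]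
  have h1sub : ∀ p : Nat.Primes, (0 : ℝ) < 1 - 1 / ((p : ℕ) : ℝ) := fun p => by
    have := hp2 p
    have h := hppos p
    rw [sub_pos, div_lt_one h]; linarith
  have hnu : ∀ p : Nat.Primes, (0 : ℝ) < 1 - (nu p H : ℝ) / ((p : ℕ) : ℝ) := fun p => by
    have h := hppos p
    rw [sub_pos, div_lt_one h]
    exact_mod_cast hadm p p.2
  have hfpos : ∀ p : Nat.Primes, 0 < f p := fun p =>
    mul_pos (hnu p) (zpow_pos (h1sub p) _)
  -- log decomposition
  have hlog : ∀ p : Nat.Primes, Real.log (f p) =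
      Real.log (1 - (nu p H : ℝ) / ((p : ℕ) : ℝ))
        - (m : ℝ) * Real.log (1 - 1 / ((p : ℕ) : ℝ)) := fun p => by
    rw [hf, Real.log_mul (ne_of_gt (hnu p)) (ne_of_gt (zpow_pos (h1sub p) _)),
      Real.log_zpow]
    push_cast
    ring
  -- the cutoff
  set D : ℕ := H.sup fun a => H.sup fun b => (a - b).natAbs with hD
  set K : ℕ := max (D + 1) (2 * m + 2) with hK
  have hnu_eq : ∀ p : Nat.Primes, K ≤ (p : ℕ) → nu p H = m := by
    intro p hpK
    rw [← hm]
    apply nu_eq_of_large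
    intro a ha b hb
    have h1 : (a - b).natAbs ≤ D := by
      calc (a - b).natAbs ≤ H.sup fun b => (a - b).natAbs := Finset.le_sup (f := fun b => (a - b).natAbs) hb
        _ ≤ D := Finset.le_sup (f := fun a => H.sup fun b => (a - b).natAbs) ha
    have : D + 1 ≤ (p : ℕ) := le_trans (le_max_left _ _) hpK
    omega
  -- the bound on log f for large p
  set C : ℝ := 2 * (m : ℝ) ^ 2 + 2 * (m : ℝ) with hC
  have hCnonneg : 0 ≤ C := by positivity
  have hbound : ∀ p : Nat.Primes, K ≤ (p : ℕ) →
      |Real.log (f p)| ≤ C / ((p : ℕ) : ℝ) ^ 2 := by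
    intro p hpK
    have hpr := hppos p
    have hm2 : (2 * m + 2 : ℝ) ≤ ((p : ℕ) : ℝ) := by
      exact_mod_cast le_trans (le_max_right (D + 1) (2 * m + 2)) hpK
    have hx1 : (0 : ℝ) ≤ (m : ℝ) / ((p : ℕ) : ℝ) := by positivity
    have hx2 : (m : ℝ) / ((p : ℕ) : ℝ) ≤ 1 / 2 := by
      rw [div_le_div_iff₀ hpr (by norm_num)]; linarith
    have hy1 : (0 : ℝ) ≤ 1 / ((p : ℕ) : ℝ) := by positivity
    have hy2 : (1 : ℝ) / ((p : ℕ) : ℝ) ≤ 1 / 2 := by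
      rw [div_le_div_iff₀ hpr (by norm_num)]; linarith [hp2 p]
    have b1 := log_one_sub_bound hx1 hx2
    have b2 := log_one_sub_bound hy1 hy2
    rw [hlog p, hnu_eq p hpK]
    have key : Real.log (1 - (m : ℝ) / ((p : ℕ) : ℝ))
        - (m : ℝ) * Real.log (1 - 1 / ((p : ℕ) : ℝ))
        = (Real.log (1 - (m : ℝ) / ((p : ℕ) : ℝ)) + (m : ℝ) / ((p : ℕ) : ℝ))
          - (m : ℝ) * (Real.log (1 - 1 / ((p : ℕ) : ℝ)) + 1 / ((p : ℕ) : ℝ)) := by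
      ring
    rw [key]
    calc |_| ≤ |Real.log (1 - (m : ℝ) / ((p : ℕ) : ℝ)) + (m : ℝ) / ((p : ℕ) : ℝ)|
        + |(m : ℝ) * (Real.log (1 - 1 / ((p : ℕ) : ℝ)) + 1 / ((p : ℕ) : ℝ))| :=
          abs_sub _ _
      _ ≤ 2 * ((m : ℝ) / ((p : ℕ) : ℝ)) ^ 2 + (m : ℝ) * (2 * (1 / ((p : ℕ) : ℝ)) ^ 2) := by
          rw [abs_mul, abs_of_nonneg (by positivity : (0:ℝ) ≤ (m:ℝ))]
          have := mul_le_mul_of_nonneg_left b2 (by positivity : (0:ℝ) ≤ (m:ℝ))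
          linarith [b1]
      _ = C / ((p : ℕ) : ℝ) ^ 2 := by
          rw [hC]
          field_simp
  -- summability of the bound
  have hsumbound : Summable (fun p : Nat.Primes => C / ((p : ℕ) : ℝ) ^ 2) := by
    have h1 : Summable (fun n : ℕ => C * (1 / (n : ℝ) ^ 2)) :=
      (Real.summable_one_div_nat_pow.mpr one_lt_two).mul_left C
    have h2 : Summable (fun p : Nat.Primes => C * (1 / ((p : ℕ) : ℝ) ^ 2)) :=
      h1.comp_injective (Nat.Primes.coe_nat_injective)
    simpa [Function.comp, mul_one_div, div_eq_mul_inv] using h2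
  -- split log f into small and large parts
  have hsum : Summable (fun p : Nat.Primes => Real.log (f p)) := by
    have hsplit : (fun p : Nat.Primes => Real.log (f p)) =
        (fun p : Nat.Primes => if (p : ℕ) < K then Real.log (f p) else 0)
        + fun p : Nat.Primes => if (p : ℕ) < K then 0 else Real.log (f p) := by
      funext p
      by_cases h : (p : ℕ) < K <;> simp [h]
    rw [hsplit]
    apply Summable.add
    · apply summable_of_ne_finset_zero (L := SummationFilter.unconditional _) (s := ((Finset.range K).subtype Nat.Prime : Finset Nat.Primes))
      intro p hp
      have : ¬ (p : ℕ) < K := by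
        intro hlt
        exact hp (by simpa [Finset.mem_subtype, Finset.mem_range] using hlt)
      simp [this]
    · apply Summable.of_abs
      apply Summable.of_nonneg_of_le (fun p => abs_nonneg _) _ hsumbound
      intro p
      by_cases h : (p : ℕ) < K
      · simp [h]
        positivity
      · simp only [h, if_false]
        exact hbound p (not_lt.mp h)
  -- conclude via exp
  have hprod : HasProd f (Real.exp (∑' p : Nat.Primes, Real.log (f p))) := by
    have := hsum.hasSum.rexp
    have heq : (Real.exp ∘ fun p : Nat.Primes => Real.log (f p)) = f := by
      funext p
      simp [Function.comp, Real.exp_log (hfpos p)]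
    rwa [heq] at this
  exact ⟨hprod.multipliable, hprod.tprod_eq ▸ Real.exp_pos _⟩
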